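/- Invariance of the limiting erasure channel under each measurement setting: Let n be a positive integer, A a finite nonempty set, and for each x ∈ A let {E^x_a}_{a ∈ O_x} be a finite family of n×n complex orthogonal projections (Hermitian idempotents) with ∑_a E^x_a = 1. Let Ω̄ := (1/|A|) ∑_{x∈A} ∑_a E^x_a ⊗ₖ (E^x_a)ᵀ, an (n·n)×(n·n) matrix. Then the limit Ω̄^∞ := lim_{N→∞} Ω̄^N exists (entrywise), and for every x ∈ A, Ω̄^∞ · (∑_a E^x_a ⊗ₖ (E^x_a)ᵀ) = Ω̄^∞. -/

import Mathlib

open Matrix Filter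
open scoped Kronecker

section helpers
lemma star_mul_self_re (z : ℂ) : (star z * z).re = Complex.normSq z := by
  rw [Complex.star_def, ← Complex.normSq_eq_conj_mul_self, Complex.ofReal_re]

/-- Sum of `Kᴴ * K` equal to zero forces each `K` to vanish. -/
lemma sum_conjTranspose_mul_self_eq_zero' {m ι : Type*} [Fintype m] {s : Finset ι}
    {K : ι → Matrix m m ℂ} (h : ∑ i ∈ s, (K i)ᴴ * K i = 0) : ∀ i ∈ s, K i = 0 := by
  have hterm : ∀ i, (Matrix.trace ((K i)ᴴ * K i)).re
      = ∑ l : m, ∑ j : m, Complex.normSq (K i j l) := by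
    intro i
    simp only [Matrix.trace, Matrix.diag, Matrix.mul_apply, Matrix.conjTranspose_apply,
      Complex.re_sum]
    exact Finset.sum_congr rfl fun l _ => Finset.sum_congr rfl fun j _ => star_mul_self_re _
  have htr : ∑ i ∈ s, (Matrix.trace ((K i)ᴴ * K i)).re = 0 := by
    rw [← Complex.re_sum, ← Matrix.trace_sum, h, Matrix.trace_zero, Complex.zero_re]
  intro i hi
  have hnn : ∀ i ∈ s, 0 ≤ (Matrix.trace ((K i)ᴴ * K i)).re := fun i _ => by
    rw [hterm]
    exact Finset.sum_nonneg fun l _ => Finset.sum_nonneg fun j _ => Complex.normSq_nonneg _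
  have h0 : (Matrix.trace ((K i)ᴴ * K i)).re = 0 :=
    (Finset.sum_eq_zero_iff_of_nonneg hnn).mp htr i hi
  rw [hterm] at h0
  ext j l
  have h1 := (Finset.sum_eq_zero_iff_of_nonneg (fun l _ => Finset.sum_nonneg
    (fun j _ => Complex.normSq_nonneg _))).mp h0 l (Finset.mem_univ l)
  have h2 := (Finset.sum_eq_zero_iff_of_nonneg (fun j _ => Complex.normSq_nonneg _)).mp h1 j
    (Finset.mem_univ j)
  simpa using Complex.normSq_eq_zero.mp h2

lemma kron_conjT {l p : Type*} (A : Matrix l l ℂ) (B : Matrix p p ℂ) :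
    (A ⊗ₖ B)ᴴ = Aᴴ ⊗ₖ Bᴴ := by
  ext ⟨i1, i2⟩ ⟨j1, j2⟩
  simp [Matrix.conjTranspose_apply, Matrix.kroneckerMap_apply, mul_comm]

section fam
variable {n : ℕ} {O : Type*} [Fintype O] [DecidableEq O]
  (E : O → Matrix (Fin n) (Fin n) ℂ)

lemma fam_orth (hherm : ∀ a, (E a).IsHermitian) (hidem : ∀ a, E a * E a = E a)
    (hsum : ∑ a, E a = 1) : ∀ a b, a ≠ b → E a * E b = 0 := by
  intro a b hab
  have herase : ∑ c ∈ Finset.univ.erase b, E c = 1 - E b := by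
    have h := hsum
    rw [← Finset.add_sum_erase _ E (Finset.mem_univ b)] at h
    linear_combination (norm := abel) h
  have key : ∑ c ∈ Finset.univ.erase b, (E c * E b)ᴴ * (E c * E b) = 0 := by
    have hc : ∀ c, (E c * E b)ᴴ * (E c * E b) = E b * E c * E b := by
      intro c
      rw [Matrix.conjTranspose_mul, (hherm c).eq, (hherm b).eq]
      have : E b * E c * (E c * E b) = E b * (E c * E c) * E b := by noncomm_ring
      rw [this, hidem c]
    calc ∑ c ∈ Finset.univ.erase b, (E c * E b)ᴴ * (E c * E b)
        = E b * (∑ c ∈ Finset.univ.erase b, E c) * E b := by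
          simp only [hc]; rw [Finset.mul_sum, Finset.sum_mul]
      _ = 0 := by
          rw [herase]
          have hx : E b * (1 - E b) * E b = E b * E b - E b * (E b * E b) := by noncomm_ring
          rw [hx]
          simp only [hidem b]
          exact sub_self _
  exact sum_conjTranspose_mul_self_eq_zero' key a
    (Finset.mem_erase.mpr ⟨hab, Finset.mem_univ a⟩)

lemma fam_proj_herm (hherm : ∀ a, (E a).IsHermitian) :
    (∑ a, E a ⊗ₖ (E a)ᵀ)ᴴ = ∑ a, E a ⊗ₖ (E a)ᵀ := by
  rw [Matrix.conjTranspose_sum]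
  refine Finset.sum_congr rfl fun a _ => ?_
  rw [kron_conjT, (hherm a).eq]
  congr 1
  have h : (E a)ᵀᴴ = ((E a)ᴴ)ᵀ := by
    ext i j; simp [Matrix.conjTranspose_apply, Matrix.transpose_apply]
  rw [h, (hherm a).eq]

lemma fam_proj_idem (hherm : ∀ a, (E a).IsHermitian) (hidem : ∀ a, E a * E a = E a)
    (hsum : ∑ a, E a = 1) :
    (∑ a, E a ⊗ₖ (E a)ᵀ) * (∑ a, E a ⊗ₖ (E a)ᵀ) = ∑ a, E a ⊗ₖ (E a)ᵀ := by
  rw [Finset.sum_mul_sum]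
  refine Finset.sum_congr rfl fun a _ => ?_
  rw [Finset.sum_eq_single_of_mem a (Finset.mem_univ a)]
  · rw [← Matrix.mul_kronecker_mul, hidem a, ← Matrix.transpose_mul, hidem a]
  · intro b _ hba
    rw [← Matrix.mul_kronecker_mul, fam_orth E hherm hidem hsum a b (Ne.symm hba),
      Matrix.zero_kronecker]
end fam

lemma herm_idem_quad_nonneg {m : Type*} [Fintype m] [DecidableEq m] {P : Matrix m m ℂ}
    (hP : Pᴴ = P) (hP2 : P * P = P) (v : m → ℂ) :
    0 ≤ (star v ⬝ᵥ P *ᵥ v).re := by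
  have key : star (P *ᵥ v) ⬝ᵥ (P *ᵥ v) = star v ⬝ᵥ P *ᵥ v := by
    rw [star_mulVec, hP, ← Matrix.dotProduct_mulVec, Matrix.mulVec_mulVec, hP2]
  rw [← key]
  simp only [dotProduct, Pi.star_apply, Complex.re_sum]
  exact Finset.sum_nonneg fun j _ => (star_mul_self_re _) ▸ Complex.normSq_nonneg _

lemma herm_idem_quad_le {m : Type*} [Fintype m] [DecidableEq m] {P : Matrix m m ℂ}
    (hP : Pᴴ = P) (hP2 : P * P = P) (v : m → ℂ) :
    (star v ⬝ᵥ P *ᵥ v).re ≤ (star v ⬝ᵥ v).re := by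
  have h1 : ((1 : Matrix m m ℂ) - P)ᴴ = 1 - P := by
    rw [Matrix.conjTranspose_sub, Matrix.conjTranspose_one, hP]
  have h2 : ((1 : Matrix m m ℂ) - P) * (1 - P) = 1 - P := by
    rw [sub_mul, one_mul, mul_sub, mul_one, hP2]; abel
  have := herm_idem_quad_nonneg h1 h2 v
  rw [Matrix.sub_mulVec, Matrix.one_mulVec, dotProduct_sub, Complex.sub_re] at this
  linarith

end helpers

set_option maxHeartbeats 1000000 in
/-- Invariance of the limiting erasure channel under each measurement setting:
`Ω̄^∞ := lim_N Ω̄^N` exists and `Ω̄^∞ · Ω̄_x = Ω̄^∞` for every setting `x`. -/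
theorem limiting_erasure_channel_invariance
    (n : ℕ) (hn : 0 < n)
    (A : Type) [Fintype A] [Nonempty A]
    (O : A → Type) [∀ x, Fintype (O x)]
    (E : ∀ x : A, O x → Matrix (Fin n) (Fin n) ℂ)
    (hherm : ∀ x a, (E x a).IsHermitian)
    (hidem : ∀ x a, E x a * E x a = E x a)
    (hsum : ∀ x, ∑ a, E x a = 1) :
    let Ω : Matrix (Fin n × Fin n) (Fin n × Fin n) ℂ :=
      (1 / (Fintype.card A : ℂ)) • ∑ x : A, ∑ a, E x a ⊗ₖ (E x a)ᵀ
    ∃ Ωinf : Matrix (Fin n × Fin n) (Fin n × Fin n) ℂ,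
      (∀ i j, Tendsto (fun N : ℕ => (Ω ^ N) i j) atTop (nhds (Ωinf i j))) ∧
      ∀ x : A, Ωinf * (∑ a, E x a ⊗ₖ (E x a)ᵀ) = Ωinf := by
  classical
  intro Ω
  have hΩdef : Ω = (1 / (Fintype.card A : ℂ)) • ∑ x : A, ∑ a, E x a ⊗ₖ (E x a)ᵀ := rfl
  clear_value Ω
  set P : A → Matrix (Fin n × Fin n) (Fin n × Fin n) ℂ := fun x => ∑ a, E x a ⊗ₖ (E x a)ᵀ with hPdef
  rw [show (∑ x : A, ∑ a, E x a ⊗ₖ (E x a)ᵀ) = ∑ x : A, P x from rfl] at hΩdef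
  -- projection structure of each P x  (to fill with fam lemmas)
  have hPh : ∀ x, (P x)ᴴ = P x := fun x => fam_proj_herm (E x) (hherm x)
  have hP2 : ∀ x, P x * P x = P x := fun x =>
    fam_proj_idem (E x) (hherm x) (hidem x) (hsum x)
  -- card facts
  have hcard : (0 : ℝ) < (Fintype.card A : ℝ) := by
    exact_mod_cast Fintype.card_pos
  have hcardC : (Fintype.card A : ℂ) ≠ 0 := by
    exact_mod_cast Nat.cast_ne_zero.mpr Fintype.card_ne_zero
  -- Ω is Hermitian
  have hΩ : Ω.IsHermitian := by
    show Ωᴴ = Ω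
    rw [hΩdef, Matrix.conjTranspose_smul, Matrix.conjTranspose_sum]
    congr 1
    · simp
    · exact Finset.sum_congr rfl fun x _ => hPh x
  set μ : Fin n × Fin n → ℝ := hΩ.eigenvalues with hμdef
  set U : Matrix (Fin n × Fin n) (Fin n × Fin n) ℂ := (hΩ.eigenvectorUnitary : Matrix (Fin n × Fin n) (Fin n × Fin n) ℂ) with hUdef
  have hU1 : star U * U = 1 := (Unitary.mem_iff.mp hΩ.eigenvectorUnitary.2).1
  have hU2 : U * star U = 1 := (Unitary.mem_iff.mp hΩ.eigenvectorUnitary.2).2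
  have hspec : Ω = U * Matrix.diagonal (fun k => (μ k : ℂ)) * star U := hΩ.spectral_theorem
  -- eigenvalue bounds
  have hbound : ∀ k, 0 ≤ μ k ∧ μ k ≤ 1 := by
    intro k
    set v : Fin n × Fin n → ℂ := ⇑(hΩ.eigenvectorBasis k) with hvdef
    have hv1 : star v ⬝ᵥ v = 1 := by
      have h := EuclideanSpace.inner_eq_star_dotProduct (𝕜 := ℂ)
        (hΩ.eigenvectorBasis k) (hΩ.eigenvectorBasis k)
      rw [inner_self_eq_norm_sq_to_K, hΩ.eigenvectorBasis.orthonormal.1 k] at h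
      rw [dotProduct_comm]; simpa using h.symm
    have hquad : star v ⬝ᵥ Ω *ᵥ v = (μ k : ℂ) := by
      calc star v ⬝ᵥ Ω *ᵥ v = star v ⬝ᵥ (μ k • v) := by rw [hΩ.mulVec_eigenvectorBasis k]
        _ = μ k • (star v ⬝ᵥ v) := dotProduct_smul _ _ _
        _ = (μ k : ℂ) := by rw [hv1, Complex.real_smul, mul_one]
    have hsplit : (star v ⬝ᵥ Ω *ᵥ v).re
        = (1 / (Fintype.card A : ℝ)) * ∑ x : A, (star v ⬝ᵥ P x *ᵥ v).re := by
      have hsumv : (∑ x : A, P x) *ᵥ v = ∑ x : A, P x *ᵥ v := by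
        funext j
        simp only [Matrix.mulVec, dotProduct, Matrix.sum_apply, Finset.sum_apply,
          Finset.sum_mul]
        rw [Finset.sum_comm]
      have hds : star v ⬝ᵥ (∑ x : A, P x *ᵥ v) = ∑ x : A, star v ⬝ᵥ (P x *ᵥ v) := by
        simp only [dotProduct, Finset.sum_apply, Finset.mul_sum]
        rw [Finset.sum_comm]
      have hmv : star v ⬝ᵥ Ω *ᵥ v
          = (1 / (Fintype.card A : ℂ)) * ∑ x : A, star v ⬝ᵥ (P x *ᵥ v) := by
        rw [hΩdef, Matrix.smul_mulVec, dotProduct_smul, hsumv, hds,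
          smul_eq_mul]
      rw [hmv]
      have hcast : (1 / (Fintype.card A : ℂ)) = ((1 / (Fintype.card A : ℝ) : ℝ) : ℂ) := by
        push_cast; ring
      rw [hcast, Complex.re_ofReal_mul, Complex.re_sum]
    have hterm : ∀ x : A, 0 ≤ (star v ⬝ᵥ P x *ᵥ v).re ∧ (star v ⬝ᵥ P x *ᵥ v).re ≤ 1 := by
      intro x
      refine ⟨herm_idem_quad_nonneg (hPh x) (hP2 x) v, ?_⟩
      have := herm_idem_quad_le (hPh x) (hP2 x) v
      rw [hv1] at this
      simpa using this
    have hre : μ k = (star v ⬝ᵥ Ω *ᵥ v).re := by rw [hquad, Complex.ofReal_re]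
    constructor
    · rw [hre, hsplit]
      have h0s : 0 ≤ ∑ x : A, (star v ⬝ᵥ P x *ᵥ v).re :=
        Finset.sum_nonneg fun x _ => (hterm x).1
      have h1c : (0:ℝ) ≤ 1 / (Fintype.card A : ℝ) := by positivity
      exact mul_nonneg h1c h0s
    · rw [hre, hsplit]
      have hle : ∑ x : A, (star v ⬝ᵥ P x *ᵥ v).re ≤ (Fintype.card A : ℝ) := by
        calc ∑ x : A, (star v ⬝ᵥ P x *ᵥ v).re ≤ ∑ _x : A, (1:ℝ) :=
              Finset.sum_le_sum fun x _ => (hterm x).2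
          _ = (Fintype.card A : ℝ) := by simp
      rw [div_mul_eq_mul_div, one_mul, div_le_one hcard]
      exact hle
  -- powers
  have hpow : ∀ N : ℕ, Ω ^ N = U * Matrix.diagonal (fun k => (μ k : ℂ) ^ N) * star U := by
    intro N
    induction N with
    | zero =>
      simp only [pow_zero]
      rw [Matrix.diagonal_one, mul_one, hU2]
    | succ N ih =>
      rw [pow_succ, ih, hspec]
      calc U * Matrix.diagonal (fun k => (μ k : ℂ) ^ N) * star U *
            (U * Matrix.diagonal (fun k => (μ k : ℂ)) * star U)
          = U * (Matrix.diagonal (fun k => (μ k : ℂ) ^ N) * (star U * U) *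
              Matrix.diagonal (fun k => (μ k : ℂ))) * star U := by noncomm_ring
        _ = U * Matrix.diagonal (fun k => (μ k : ℂ) ^ (N+1)) * star U := by
            rw [hU1, mul_one, Matrix.diagonal_mul_diagonal,
              show (fun k => (μ k : ℂ) ^ N * (μ k : ℂ)) = fun k => (μ k : ℂ) ^ (N+1) from
                funext fun k => (pow_succ _ _).symm]
  -- limit diagonal
  set dinf : Fin n × Fin n → ℂ := fun k => if μ k = 1 then 1 else 0 with hdinf
  set Ωinf : Matrix (Fin n × Fin n) (Fin n × Fin n) ℂ := U * Matrix.diagonal dinf * star U with hΩinf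
  have hentry : ∀ (d : Fin n × Fin n → ℂ) (i j : Fin n × Fin n),
      (U * Matrix.diagonal d * star U) i j = ∑ k, U i k * d k * (star U) k j := by
    intro d i j
    rw [Matrix.mul_apply]
    exact Finset.sum_congr rfl fun k _ => by rw [Matrix.mul_diagonal]
  refine ⟨Ωinf, ?_, ?_⟩
  · intro i j
    have hconv : ∀ k : Fin n × Fin n, Tendsto (fun N : ℕ => ((μ k : ℂ)) ^ N) atTop (nhds (dinf k)) := by
      intro k
      by_cases h : μ k = 1
      · simp only [hdinf, h, if_pos rfl, Complex.ofReal_one, one_pow]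
        exact tendsto_const_nhds
      · have h0 : 0 ≤ μ k := (hbound k).1
        have h1 : μ k < 1 := lt_of_le_of_ne (hbound k).2 h
        have : Tendsto (fun N : ℕ => μ k ^ N) atTop (nhds 0) :=
          tendsto_pow_atTop_nhds_zero_of_lt_one h0 h1
        have := (Complex.continuous_ofReal.tendsto 0).comp this
        simp only [hdinf, if_neg h, Function.comp_def, Complex.ofReal_pow,
          Complex.ofReal_zero] at this ⊢
        exact this
    have : Tendsto (fun N : ℕ => ∑ k, U i k * ((μ k : ℂ)) ^ N * (star U) k j) atTop
        (nhds (∑ k, U i k * dinf k * (star U) k j)) := by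
      refine tendsto_finset_sum _ fun k _ => ?_
      exact (((hconv k).const_mul (U i k)).mul_const ((star U) k j))
    rw [hΩinf, hentry]
    refine Tendsto.congr (fun N => ?_) this
    rw [hpow N, hentry]
  · -- invariance
    intro x
    have hstar_dinf : ∀ k, star (dinf k) = dinf k := by
      intro k; by_cases h : μ k = 1 <;> simp [hdinf, h]
    have hsd : (Matrix.diagonal dinf)ᴴ = Matrix.diagonal dinf := by
      rw [Matrix.diagonal_conjTranspose, show star dinf = dinf from funext hstar_dinf]
    have hΩinf_herm : Ωinfᴴ = Ωinf := by
      rw [hΩinf]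
      simp only [Matrix.star_eq_conjTranspose, Matrix.conjTranspose_mul,
        Matrix.conjTranspose_conjTranspose, hsd]
      rw [← mul_assoc]
    have hidem_inf : Ωinf * Ωinf = Ωinf := by
      rw [hΩinf]
      calc U * Matrix.diagonal dinf * star U * (U * Matrix.diagonal dinf * star U)
          = U * (Matrix.diagonal dinf * (star U * U) * Matrix.diagonal dinf) * star U := by
            noncomm_ring
        _ = U * Matrix.diagonal dinf * star U := by
            rw [hU1, mul_one, Matrix.diagonal_mul_diagonal,
              show (fun k => dinf k * dinf k) = dinf from
                funext fun k => by by_cases h : μ k = 1 <;> simp [hdinf, h]]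
    have hinfΩ : Ωinf * Ω = Ωinf := by
      rw [hΩinf, hspec]
      calc U * Matrix.diagonal dinf * star U * (U * Matrix.diagonal (fun k => (μ k : ℂ)) * star U)
          = U * (Matrix.diagonal dinf * (star U * U) * Matrix.diagonal (fun k => (μ k : ℂ)))
            * star U := by noncomm_ring
        _ = U * Matrix.diagonal dinf * star U := by
            rw [hU1, mul_one, Matrix.diagonal_mul_diagonal,
              show (fun k => dinf k * (μ k : ℂ)) = dinf from
                funext fun k => by by_cases h : μ k = 1 <;> simp [hdinf, h]]
    -- the kill-shot
    set K : A → Matrix (Fin n × Fin n) (Fin n × Fin n) ℂ := fun y => (1 - P y) * Ωinf with hK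
    have hKsum : ∑ y : A, (K y)ᴴ * K y = 0 := by
      have hterm : ∀ y : A, (K y)ᴴ * K y = Ωinf * (1 - P y) * Ωinf := by
        intro y
        have h1 : ((1 : Matrix (Fin n × Fin n) (Fin n × Fin n) ℂ) - P y)ᴴ = 1 - P y := by
          rw [Matrix.conjTranspose_sub, Matrix.conjTranspose_one, hPh y]
        have h2 : ((1 : Matrix (Fin n × Fin n) (Fin n × Fin n) ℂ) - P y) * (1 - P y) = 1 - P y := by
          rw [sub_mul, one_mul, mul_sub, mul_one, hP2 y]; abel
        rw [hK, Matrix.conjTranspose_mul, h1, hΩinf_herm]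
        calc Ωinf * (1 - P y) * ((1 - P y) * Ωinf)
            = Ωinf * ((1 - P y) * (1 - P y)) * Ωinf := by noncomm_ring
          _ = Ωinf * (1 - P y) * Ωinf := by rw [h2, ← mul_assoc]
      simp only [hterm]
      have hsum' : ∑ y : A, Ωinf * (1 - P y) * Ωinf
          = Ωinf * (∑ y : A, ((1 : Matrix (Fin n × Fin n) (Fin n × Fin n) ℂ) - P y)) * Ωinf := by
        rw [Finset.mul_sum, Finset.sum_mul]
      rw [hsum']
      have hsumP : ∑ y : A, ((1 : Matrix (Fin n × Fin n) (Fin n × Fin n) ℂ) - P y)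
          = (Fintype.card A : ℂ) • (1 - Ω) := by
        rw [Finset.sum_sub_distrib, Finset.sum_const, smul_sub]
        congr 1
        · rw [Finset.card_univ, ← Nat.cast_smul_eq_nsmul ℂ]
        · rw [hΩdef, smul_smul, mul_one_div, div_self hcardC, one_smul]
      rw [hsumP]
      rw [Matrix.mul_smul, Matrix.smul_mul]
      rw [mul_sub, mul_one, sub_mul]
      rw [hidem_inf]
      have : Ωinf * Ω * Ωinf = Ωinf := by rw [hinfΩ, hidem_inf]
      rw [this, sub_self, smul_zero]
    have hKx : K x = 0 := sum_conjTranspose_mul_self_eq_zero' hKsum x (Finset.mem_univ x)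
    have hPΩinf : P x * Ωinf = Ωinf := by
      have := hKx
      rw [hK] at this
      simp only [sub_mul, one_mul, sub_eq_zero] at this
      exact this.symm
    have : (P x * Ωinf)ᴴ = Ωinfᴴ := by rw [hPΩinf]
    rw [Matrix.conjTranspose_mul, hPh x, hΩinf_herm] at this
    exact this
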